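/- arXiv:0801.0270 — 2 statements merged into one kernel-verified Lean document; each statement's English description precedes it below -/
import Mathlib

section
/- Let K(A,B) be a complete bipartite graph whose edges are colored with two colors, blue and green. If K(A,B) is an S1-type graph, then |A| ≥ 2^{|B|} + 2 or |B| ≥ 2^{|A|} + 2. -/
/-!
Common definitions for edge-colored complete bipartite graphs.

The complete bipartite graph `K(A,B)` with partite sets `α` and `β` is modeled on the
vertex type `α ⊕ β`; an edge-coloring with color type `γ` is a function `c : α → β → γ`
(giving the color of the edge between `a : α` and `b : β`).
-/

/-- The spanning subgraph of the complete bipartite graph on parts `α`, `β` consisting of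
the edges of color `k`, under the edge-coloring `c`. -/
def biColorGraph {α β γ : Type*} (c : α → β → γ) (k : γ) : SimpleGraph (α ⊕ β) where
  Adj x y := (∃ a b, x = Sum.inl a ∧ y = Sum.inr b ∧ c a b = k) ∨
             (∃ a b, x = Sum.inr b ∧ y = Sum.inl a ∧ c a b = k)
  symm := by
    refine ⟨?_⟩
    rintro x y (⟨a, b, hx, hy, hc⟩ | ⟨a, b, hx, hy, hc⟩)
    · exact Or.inr ⟨a, b, hy, hx, hc⟩
    · exact Or.inl ⟨a, b, hy, hx, hc⟩
  loopless := by
    refine ⟨?_⟩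
    rintro x (⟨a, b, hx, hy, _⟩ | ⟨a, b, hx, hy, _⟩) <;> subst hx <;> simp at hy

/-- `S` is the vertex set of a monochromatic tree: it induces a connected subgraph in some
color class.  (A single vertex also counts as a monochromatic tree.) -/
def IsMonoTreeSet {α β γ : Type*} (c : α → β → γ) (S : Set (α ⊕ β)) : Prop :=
  ∃ k, ((biColorGraph c k).induce S).Connected

/-- `P` is a partition of the vertex set of the complete bipartite graph into
(nonempty, pairwise vertex-disjoint) vertex sets of monochromatic trees. -/
def IsMonoTreePartition {α β γ : Type*} (c : α → β → γ) (P : Finset (Set (α ⊕ β))) : Prop :=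
  (∀ S ∈ P, IsMonoTreeSet c S) ∧ ∀ x : α ⊕ β, ∃! S, S ∈ P ∧ x ∈ S

/-- The vertex set can be partitioned into at most `m` vertex-disjoint monochromatic trees. -/
def HasMonoTreePartition {α β γ : Type*} (c : α → β → γ) (m : ℕ) : Prop :=
  ∃ P : Finset (Set (α ⊕ β)), IsMonoTreePartition c P ∧ P.card ≤ m

/-- Every vertex has color degree 3, i.e. all three colors appear on its incident edges. -/
def ColorDegreeThree {α β : Type*} (c : α → β → Fin 3) : Prop :=
  (∀ (a : α) (k : Fin 3), ∃ b, c a b = k) ∧ ∀ (b : β) (k : Fin 3), ∃ a, c a b = k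

/-! For 2-edge-colorings we use `Bool` as the color type: `true` = blue, `false` = green. -/

/-- The vertices of `α` all of whose incident edges are blue. -/
def XA {α β : Type*} (c : α → β → Bool) : Set α := {a | ∀ b, c a b = true}

/-- The vertices of `α` all of whose incident edges are green. -/
def YA {α β : Type*} (c : α → β → Bool) : Set α := {a | ∀ b, c a b = false}

/-- The vertices of `β` all of whose incident edges are blue. -/
def XB {α β : Type*} (c : α → β → Bool) : Set β := {b | ∀ a, c a b = true}

/-- The vertices of `β` all of whose incident edges are green. -/
def YB {α β : Type*} (c : α → β → Bool) : Set β := {b | ∀ a, c a b = false}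

/-- `S`-type graph: `X(G) ≠ ∅` and `Y(G) ≠ ∅`. -/
def IsSType {α β : Type*} (c : α → β → Bool) : Prop :=
  ((XA c).Nonempty ∨ (XB c).Nonempty) ∧ ((YA c).Nonempty ∨ (YB c).Nonempty)

/-- `M`-type graph: there are partitions `A = A1 ∪ A1ᶜ`, `B = B1 ∪ B1ᶜ` with all four parts
nonempty such that `K(A1,B1)` and `K(A1ᶜ,B1ᶜ)` are blue and `K(A1,B1ᶜ)`, `K(A1ᶜ,B1)`
are green. -/
def IsMType {α β : Type*} (c : α → β → Bool) : Prop :=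
  ∃ (A1 : Set α) (B1 : Set β),
    A1.Nonempty ∧ A1ᶜ.Nonempty ∧ B1.Nonempty ∧ B1ᶜ.Nonempty ∧
    (∀ a ∈ A1, ∀ b ∈ B1, c a b = true) ∧
    (∀ a ∈ A1ᶜ, ∀ b ∈ B1ᶜ, c a b = true) ∧
    (∀ a ∈ A1, ∀ b ∈ B1ᶜ, c a b = false) ∧
    (∀ a ∈ A1ᶜ, ∀ b ∈ B1, c a b = false)

/-- For a subset `Bi ⊆ B`, the set `b(Bi) ⊆ A` of vertices sending blue edges to all of `Bi`
and green edges to all of `Biᶜ`.  (Thus `b(B̄i) = bsetA c Biᶜ`.) -/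
def bsetA {α β : Type*} (c : α → β → Bool) (Bi : Set β) : Set α :=
  {a | (∀ b ∈ Bi, c a b = true) ∧ ∀ b ∈ Biᶜ, c a b = false}

/-- For a subset `Ai ⊆ A`, the set `b(Ai) ⊆ B` of vertices sending blue edges to all of `Ai`
and green edges to all of `Aiᶜ`. -/
def bsetB {α β : Type*} (c : α → β → Bool) (Ai : Set α) : Set β :=
  {b | (∀ a ∈ Ai, c a b = true) ∧ ∀ a ∈ Aiᶜ, c a b = false}

/-- `S1*`-type graph with `X(G) ∪ Y(G) ⊆ A`: `|B| = 1`, `|A1| ≥ 2` and `|A3| ≥ 2`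
(where `A1 = X(G)`, `A3 = Y(G)`). -/
def IsS1StarA {α β : Type*} [Fintype β] (c : α → β → Bool) : Prop :=
  Fintype.card β = 1 ∧ 2 ≤ (XA c).ncard ∧ 2 ≤ (YA c).ncard

/-- `S1'`-type graph with `X(G) ∪ Y(G) ⊆ A`: `|A1| ≥ 2`, `|A3| ≥ 2`, `|B| ≥ 2`, and for
every partition `B = Bi ∪ B̄i` into nonempty parts, `b(Bi) ≠ ∅` and `b(B̄i) ≠ ∅`. -/
def IsS1PrimeA {α β : Type*} [Fintype β] (c : α → β → Bool) : Prop :=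
  2 ≤ (XA c).ncard ∧ 2 ≤ (YA c).ncard ∧ 2 ≤ Fintype.card β ∧
  ∀ Bi : Set β, Bi.Nonempty → Biᶜ.Nonempty →
    (bsetA c Bi).Nonempty ∧ (bsetA c Biᶜ).Nonempty

/-- `S1*`-type graph with `X(G) ∪ Y(G) ⊆ B`. -/
def IsS1StarB {α β : Type*} [Fintype α] (c : α → β → Bool) : Prop :=
  Fintype.card α = 1 ∧ 2 ≤ (XB c).ncard ∧ 2 ≤ (YB c).ncard

/-- `S1'`-type graph with `X(G) ∪ Y(G) ⊆ B`. -/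
def IsS1PrimeB {α β : Type*} [Fintype α] (c : α → β → Bool) : Prop :=
  2 ≤ (XB c).ncard ∧ 2 ≤ (YB c).ncard ∧ 2 ≤ Fintype.card α ∧
  ∀ Ai : Set α, Ai.Nonempty → Aiᶜ.Nonempty →
    (bsetB c Ai).Nonempty ∧ (bsetB c Aiᶜ).Nonempty

/-- `S1`-type graph: `S1*`-type or `S1'`-type. -/
def IsS1 {α β : Type*} [Fintype α] [Fintype β] (c : α → β → Bool) : Prop :=
  IsS1StarA c ∨ IsS1PrimeA c ∨ IsS1StarB c ∨ IsS1PrimeB c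

/-- `S2`-type graph: an `S`-type graph that is not `S1`-type. -/
def IsS2 {α β : Type*} [Fintype α] [Fintype β] (c : α → β → Bool) : Prop :=
  IsSType c ∧ ¬ IsS1 c

open Finset in
lemma auxA {α β : Type*} [Fintype α] [Fintype β] [Nonempty β] (c : α → β → Bool)
    (hX : 2 ≤ (XA c).ncard) (hY : 2 ≤ (YA c).ncard)
    (hb : ∀ Bi : Set β, Bi.Nonempty → Biᶜ.Nonempty → (bsetA c Bi).Nonempty) :
    2 ^ Fintype.card β + 2 ≤ Fintype.card α := by
  classical
  set f : α → Finset β := fun a => Finset.univ.filter (fun b => c a b = true) with hf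
  have hcard : Fintype.card α
      = ∑ S : Finset β, (Finset.univ.filter (fun a => f a = S)).card := by
    rw [← Finset.card_univ]
    exact Finset.card_eq_sum_card_fiberwise (fun x _ => Finset.mem_univ _)
  have hfib : ∀ S : Finset β,
      (if S = Finset.univ ∨ S = ∅ then 2 else 1)
        ≤ (Finset.univ.filter (fun a => f a = S)).card := by
    intro S
    split_ifs with h
    · rcases h with h | h
      · subst h
        have hsub : (XA c).toFinset ⊆ Finset.univ.filter (fun a => f a = Finset.univ) := by
          intro a ha
          simp only [Set.mem_toFinset, XA, Set.mem_setOf_eq] at ha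
          simp [hf, Finset.eq_univ_iff_forall, ha]
          have h' : a ∈ XA c := by rw [← Set.mem_toFinset]; convert ha; congr
          exact fun x => h' x
        calc 2 ≤ (XA c).ncard := hX
          _ = (XA c).toFinset.card := Set.ncard_eq_toFinset_card' _
          _ ≤ _ := Finset.card_le_card hsub
      · subst h
        have hsub : (YA c).toFinset ⊆ Finset.univ.filter (fun a => f a = ∅) := by
          intro a ha
          simp only [Set.mem_toFinset, YA, Set.mem_setOf_eq] at ha
          simp [hf, Finset.filter_eq_empty_iff, ha]
          have h' : a ∈ YA c := by rw [← Set.mem_toFinset]; convert ha; congr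
          exact fun x => h' x
        calc 2 ≤ (YA c).ncard := hY
          _ = (YA c).toFinset.card := Set.ncard_eq_toFinset_card' _
          _ ≤ _ := Finset.card_le_card hsub
    · push_neg at h
      obtain ⟨hne, hSne⟩ := h
      have hS1 : (↑S : Set β).Nonempty := by
        rw [Finset.coe_nonempty]
        exact hSne
      have hS2 : (↑S : Set β)ᶜ.Nonempty := by
        rw [← Finset.coe_compl, Finset.coe_nonempty]
        rwa [Finset.nonempty_iff_ne_empty, Ne, Finset.compl_eq_empty_iff]
      obtain ⟨a, ha1, ha2⟩ := hb ↑S hS1 hS2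
      have : a ∈ Finset.univ.filter (fun a => f a = S) := by
        simp only [Finset.mem_filter, Finset.mem_univ, true_and, hf]
        ext b
        simp only [Finset.mem_filter, Finset.mem_univ, true_and]
        constructor
        · intro hc
          by_contra hbS
          have := ha2 b hbS
          rw [this] at hc; exact Bool.false_ne_true hc
        · intro hbS; exact ha1 b hbS
      exact Finset.card_pos.mpr ⟨a, this⟩
  have key : ∑ S : Finset β, (if S = Finset.univ ∨ S = ∅ then 2 else 1)
      = 2 ^ Fintype.card β + 2 := by
    have h1 : ∀ S : Finset β, (if S = Finset.univ ∨ S = ∅ then 2 else 1)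
        = 1 + (if S = Finset.univ ∨ S = ∅ then 1 else 0) := by
      intro S; split_ifs <;> rfl
    rw [Finset.sum_congr rfl (fun S _ => h1 S), Finset.sum_add_distrib,
      Finset.sum_const, ← Finset.card_filter]
    have h2 : Finset.univ.filter (fun S : Finset β => S = Finset.univ ∨ S = ∅)
        = {Finset.univ, ∅} := by
      ext S; simp [Finset.mem_insert]
    rw [h2]
    have h3 : (Finset.univ : Finset β) ≠ ∅ := Finset.univ_nonempty.ne_empty
    rw [Finset.card_insert_of_notMem (by simp [h3]), Finset.card_singleton]
    simp [Fintype.card_finset]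
  calc 2 ^ Fintype.card β + 2 = _ := key.symm
    _ ≤ ∑ S : Finset β, (Finset.univ.filter (fun a => f a = S)).card :=
        Finset.sum_le_sum (fun S _ => hfib S)
    _ = Fintype.card α := hcard.symm

lemma vac {γ : Type*} [Fintype γ] (h1 : Fintype.card γ = 1)
    (Bi : Set γ) (hBi : Bi.Nonempty) (hBic : Biᶜ.Nonempty) : False := by
  obtain ⟨b, hbmem⟩ := hBi
  obtain ⟨b', hb'⟩ := hBic
  have hsub : Subsingleton γ := Fintype.card_le_one_iff_subsingleton.mp (le_of_eq h1)
  exact hb' (Subsingleton.elim b b' ▸ hbmem)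

/-- If a 2-edge-colored complete bipartite graph `K(A,B)` is an `S1`-type
graph, then `|A| ≥ 2^{|B|} + 2` or `|B| ≥ 2^{|A|} + 2`. -/
theorem s1type_card_bound {α β : Type*} [Fintype α] [Fintype β] (c : α → β → Bool)
    (h : IsS1 c) :
    2 ^ Fintype.card β + 2 ≤ Fintype.card α ∨
    2 ^ Fintype.card α + 2 ≤ Fintype.card β := by
  rcases h with ⟨h1, hX, hY⟩ | ⟨hX, hY, h2, hb⟩ | ⟨h1, hX, hY⟩ | ⟨hX, hY, h2, hb⟩
  · left
    have : Nonempty β := Fintype.card_pos_iff.mp (h1 ▸ one_pos)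
    exact auxA c hX hY (fun Bi hBi hBic => (vac (γ := β) h1 Bi hBi hBic).elim)
  · left
    have : Nonempty β := Fintype.card_pos_iff.mp (by omega)
    exact auxA c hX hY (fun Bi hBi hBic => (hb Bi hBi hBic).1)
  · right
    have : Nonempty α := Fintype.card_pos_iff.mp (h1 ▸ one_pos)
    exact auxA (fun b a => c a b) hX hY
      (fun Ai hAi hAic => (vac (γ := α) h1 Ai hAi hAic).elim)
  · right
    have : Nonempty α := Fintype.card_pos_iff.mp (by omega)
    exact auxA (fun b a => c a b) hX hY (fun Ai hAi hAic => (hb Ai hAi hAic).1)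
end

section
/- Let K(A,B) be the complete bipartite graph K(n,n) whose edges are colored with three colors (red, blue, green) so that every vertex has color degree 3. Let R be a red monochromatic connected component having the maximum number of vertices among all monochromatic components, with R1 = R ∩ A ≠ A and R2 = R ∩ B ≠ B, and set C = A − R1, D = B − R2 (so every edge between R1 and D and between R2 and C is blue or green). Suppose the vertex set of the induced complete bipartite graph K(C,D) cannot be partitioned into at most two vertex-disjoint monochromatic trees. Then |C| ≥ 3 and |D| ≥ 3. -/
section Helpers

open SimpleGraph

lemma adj_inl_inr' {α β γ : Type*} (c : α → β → γ) {k : γ} {a : α} {b : β}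
    (h : c a b = k) : (biColorGraph c k).Adj (Sum.inl a) (Sum.inr b) :=
  Or.inl ⟨a, b, rfl, rfl, h⟩

lemma star_connA {α β γ : Type*} (c : α → β → γ) (k : γ) (u : α) (S : Set (α ⊕ β))
    (hu : Sum.inl u ∈ S)
    (h : ∀ x ∈ S, x = Sum.inl u ∨ ∃ b, x = Sum.inr b ∧ c u b = k) :
    ((biColorGraph c k).induce S).Connected := by
  rw [SimpleGraph.connected_iff]
  refine ⟨?_, ⟨⟨Sum.inl u, hu⟩⟩⟩
  have key : ∀ x : S, ((biColorGraph c k).induce S).Reachable x ⟨Sum.inl u, hu⟩ := by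
    rintro ⟨x, hx⟩
    rcases h x hx with rfl | ⟨b, rfl, hb⟩
    · exact Reachable.refl _
    · exact SimpleGraph.Adj.reachable (Or.inr ⟨u, b, rfl, rfl, hb⟩)
  intro x y
  exact (key x).trans (key y).symm

lemma star_connB {α β γ : Type*} (c : α → β → γ) (k : γ) (u : β) (S : Set (α ⊕ β))
    (hu : Sum.inr u ∈ S)
    (h : ∀ x ∈ S, x = Sum.inr u ∨ ∃ a, x = Sum.inl a ∧ c a u = k) :
    ((biColorGraph c k).induce S).Connected := by
  rw [SimpleGraph.connected_iff]
  refine ⟨?_, ⟨⟨Sum.inr u, hu⟩⟩⟩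
  have key : ∀ x : S, ((biColorGraph c k).induce S).Reachable x ⟨Sum.inr u, hu⟩ := by
    rintro ⟨x, hx⟩
    rcases h x hx with rfl | ⟨a, rfl, ha⟩
    · exact Reachable.refl _
    · exact SimpleGraph.Adj.reachable (Or.inl ⟨a, u, rfl, rfl, ha⟩)
  intro x y
  exact (key x).trans (key y).symm

lemma hasPart_left {α β : Type*} (c' : α → β → Fin 3)
    (u v : α) (hA : ∀ a : α, a = u ∨ a = v)
    (hall : ∀ b : β, c' u b = 0 ∨ c' v b = 0) :
    HasMonoTreePartition c' 2 := by
  classical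
  by_cases huv : u = v
  · subst huv
    have hall' : ∀ b, c' u b = 0 := fun b => (hall b).elim id id
    refine ⟨{Set.univ}, ⟨?_, ?_⟩, by simp⟩
    · intro S hS
      rw [Finset.mem_singleton] at hS
      subst hS
      refine ⟨0, star_connA c' 0 u _ trivial ?_⟩
      rintro (a | b) _
      · left; rcases hA a with rfl | rfl <;> rfl
      · right; exact ⟨b, rfl, hall' b⟩
    · intro x
      exact ⟨Set.univ, ⟨Finset.mem_singleton_self _, trivial⟩,
        fun S hS => by simpa using hS.1⟩
  · set S1 : Set (α ⊕ β) :=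
      {x | x = Sum.inl u ∨ ∃ b, x = Sum.inr b ∧ c' u b = 0} with hS1
    set S2 : Set (α ⊕ β) :=
      {x | x = Sum.inl v ∨ ∃ b, x = Sum.inr b ∧ c' u b ≠ 0} with hS2
    have h1 : IsMonoTreeSet c' S1 := by
      refine ⟨0, star_connA c' 0 u _ (Or.inl rfl) ?_⟩
      rintro x (rfl | ⟨b, rfl, hb⟩)
      · exact Or.inl rfl
      · exact Or.inr ⟨b, rfl, hb⟩
    have h2 : IsMonoTreeSet c' S2 := by
      refine ⟨0, star_connA c' 0 v _ (Or.inl rfl) ?_⟩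
      rintro x (rfl | ⟨b, rfl, hb⟩)
      · exact Or.inl rfl
      · exact Or.inr ⟨b, rfl, (hall b).resolve_left hb⟩
    have hdisj : ∀ x, x ∈ S1 → x ∈ S2 → False := by
      rintro x (rfl | ⟨b, rfl, hb⟩) hx2
      · rcases hx2 with h | ⟨b, h, _⟩
        · exact huv (Sum.inl.inj h)
        · simp at h
      · rcases hx2 with h | ⟨b', h, hb'⟩
        · simp at h
        · rw [Sum.inr.inj h] at hb; exact hb' hb
    refine ⟨{S1, S2}, ⟨?_, ?_⟩, Finset.card_insert_le _ _ |>.trans (by simp)⟩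
    · intro S hS
      rcases Finset.mem_insert.mp hS with rfl | hS
      · exact h1
      · rw [Finset.mem_singleton] at hS; subst hS; exact h2
    · intro x
      have hmem : x ∈ S1 ∨ x ∈ S2 := by
        rcases x with a | b
        · rcases hA a with rfl | rfl
          · exact Or.inl (Or.inl rfl)
          · exact Or.inr (Or.inl rfl)
        · by_cases hb : c' u b = 0
          · exact Or.inl (Or.inr ⟨b, rfl, hb⟩)
          · exact Or.inr (Or.inr ⟨b, rfl, hb⟩)
      rcases hmem with hx | hx
      · refine ⟨S1, ⟨by simp, hx⟩, ?_⟩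
        rintro S ⟨hS, hxS⟩
        rcases Finset.mem_insert.mp hS with rfl | hS
        · rfl
        · rw [Finset.mem_singleton] at hS; subst hS
          exact absurd (hdisj x hx hxS) not_false
      · refine ⟨S2, ⟨by simp, hx⟩, ?_⟩
        rintro S ⟨hS, hxS⟩
        rcases Finset.mem_insert.mp hS with rfl | hS
        · exact absurd (hdisj x hxS hx) not_false
        · rw [Finset.mem_singleton] at hS; subst hS; rfl

lemma hasPart_right {α β : Type*} (c' : α → β → Fin 3)
    (u v : β) (hB : ∀ b : β, b = u ∨ b = v)
    (hall : ∀ a : α, c' a u = 0 ∨ c' a v = 0) :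
    HasMonoTreePartition c' 2 := by
  classical
  by_cases huv : u = v
  · subst huv
    have hall' : ∀ a, c' a u = 0 := fun a => (hall a).elim id id
    refine ⟨{Set.univ}, ⟨?_, ?_⟩, by simp⟩
    · intro S hS
      rw [Finset.mem_singleton] at hS
      subst hS
      refine ⟨0, star_connB c' 0 u _ trivial ?_⟩
      rintro (a | b) _
      · right; exact ⟨a, rfl, hall' a⟩
      · left; rcases hB b with rfl | rfl <;> rfl
    · intro x
      exact ⟨Set.univ, ⟨Finset.mem_singleton_self _, trivial⟩,
        fun S hS => by simpa using hS.1⟩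
  · set S1 : Set (α ⊕ β) :=
      {x | x = Sum.inr u ∨ ∃ a, x = Sum.inl a ∧ c' a u = 0} with hS1
    set S2 : Set (α ⊕ β) :=
      {x | x = Sum.inr v ∨ ∃ a, x = Sum.inl a ∧ c' a u ≠ 0} with hS2
    have h1 : IsMonoTreeSet c' S1 := by
      refine ⟨0, star_connB c' 0 u _ (Or.inl rfl) ?_⟩
      rintro x (rfl | ⟨a, rfl, ha⟩)
      · exact Or.inl rfl
      · exact Or.inr ⟨a, rfl, ha⟩
    have h2 : IsMonoTreeSet c' S2 := by
      refine ⟨0, star_connB c' 0 v _ (Or.inl rfl) ?_⟩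
      rintro x (rfl | ⟨a, rfl, ha⟩)
      · exact Or.inl rfl
      · exact Or.inr ⟨a, rfl, (hall a).resolve_left ha⟩
    have hdisj : ∀ x, x ∈ S1 → x ∈ S2 → False := by
      rintro x (rfl | ⟨a, rfl, ha⟩) hx2
      · rcases hx2 with h | ⟨a, h, _⟩
        · exact huv (Sum.inr.inj h)
        · simp at h
      · rcases hx2 with h | ⟨a', h, ha'⟩
        · simp at h
        · rw [Sum.inl.inj h] at ha; exact ha' ha
    refine ⟨{S1, S2}, ⟨?_, ?_⟩, Finset.card_insert_le _ _ |>.trans (by simp)⟩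
    · intro S hS
      rcases Finset.mem_insert.mp hS with rfl | hS
      · exact h1
      · rw [Finset.mem_singleton] at hS; subst hS; exact h2
    · intro x
      have hmem : x ∈ S1 ∨ x ∈ S2 := by
        rcases x with a | b
        · by_cases ha : c' a u = 0
          · exact Or.inl (Or.inr ⟨a, rfl, ha⟩)
          · exact Or.inr (Or.inr ⟨a, rfl, ha⟩)
        · rcases hB b with rfl | rfl
          · exact Or.inl (Or.inl rfl)
          · exact Or.inr (Or.inl rfl)
      rcases hmem with hx | hx
      · refine ⟨S1, ⟨by simp, hx⟩, ?_⟩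
        rintro S ⟨hS, hxS⟩
        rcases Finset.mem_insert.mp hS with rfl | hS
        · rfl
        · rw [Finset.mem_singleton] at hS; subst hS
          exact absurd (hdisj x hx hxS) not_false
      · refine ⟨S2, ⟨by simp, hx⟩, ?_⟩
        rintro S ⟨hS, hxS⟩
        rcases Finset.mem_insert.mp hS with rfl | hS
        · exact absurd (hdisj x hxS hx) not_false
        · rw [Finset.mem_singleton] at hS; subst hS; rfl

lemma small_set_two {s : Set (Fin n)} (hne : s.Nonempty) (hle : s.ncard ≤ 2) :
    ∃ u ∈ s, ∃ v ∈ s, ∀ a ∈ s, a = u ∨ a = v := by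
  have hfin : s.Finite := Set.toFinite _
  have hpos : 0 < s.ncard := (Set.ncard_pos hfin).mpr hne
  interval_cases h : s.ncard
  · obtain ⟨x, hx⟩ := Set.ncard_eq_one.mp h
    exact ⟨x, by simp [hx], x, by simp [hx], fun a ha => by rw [hx] at ha; exact Or.inl ha⟩
  · obtain ⟨x, y, hxy, hs⟩ := Set.ncard_eq_two.mp h
    refine ⟨x, by simp [hs], y, by simp [hs], fun a ha => ?_⟩
    rw [hs] at ha
    exact ha

end Helpers

/-- **Claim 2.** Colors: `0` = red, `1` = blue, `2` = green.
In the situation of Claim 1 (maximum red component `R` with `R1 ≠ A`, `R2 ≠ B`,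
`C = A - R1`, `D = B - R2`, and `K(C,D)` not partitionable into at most two vertex-disjoint
monochromatic trees), we have `|C| ≥ 3` and `|D| ≥ 3`. -/
theorem claim_C_D_large {n : ℕ} (c : Fin n → Fin n → Fin 3)
    (hdeg : ColorDegreeThree c)
    (R : (biColorGraph c 0).ConnectedComponent)
    (hmax : ∀ (k : Fin 3) (Q : (biColorGraph c k).ConnectedComponent),
      Q.supp.ncard ≤ R.supp.ncard)
    (hR1 : {a : Fin n | Sum.inl a ∈ R.supp} ≠ Set.univ)
    (hR2 : {b : Fin n | Sum.inr b ∈ R.supp} ≠ Set.univ)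
    (C D : Set (Fin n))
    (hC : C = {a : Fin n | Sum.inl a ∈ R.supp}ᶜ)
    (hD : D = {b : Fin n | Sum.inr b ∈ R.supp}ᶜ)
    (hCD : ¬ HasMonoTreePartition (fun (a : C) (b : D) => c a.1 b.1) 2) :
    3 ≤ C.ncard ∧ 3 ≤ D.ncard := by
  
  subst hC hD
  have hCne : ({a : Fin n | Sum.inl a ∈ R.supp}ᶜ : Set (Fin n)).Nonempty :=
    Set.nonempty_compl.mpr hR1
  have hDne : ({b : Fin n | Sum.inr b ∈ R.supp}ᶜ : Set (Fin n)).Nonempty :=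
    Set.nonempty_compl.mpr hR2
  have hsame : ∀ a b, c a b = 0 →
      (Sum.inl a ∈ R.supp ↔ Sum.inr b ∈ R.supp) := by
    intro a b h
    have hreach : (biColorGraph c 0).Reachable (Sum.inl a) (Sum.inr b) :=
      (adj_inl_inr' c h).reachable
    rw [SimpleGraph.ConnectedComponent.mem_supp_iff,
      SimpleGraph.ConnectedComponent.mem_supp_iff,
      SimpleGraph.ConnectedComponent.sound hreach]
  have hredC : ∀ b : ({b : Fin n | Sum.inr b ∈ R.supp}ᶜ : Set (Fin n)),
      ∃ a : ({a : Fin n | Sum.inl a ∈ R.supp}ᶜ : Set (Fin n)), c a.1 b.1 = 0 := by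
    rintro ⟨b, hb⟩
    obtain ⟨a, ha⟩ := hdeg.2 b 0
    refine ⟨⟨a, fun haR => ?_⟩, ha⟩
    exact hb ((hsame a b ha).mp haR)
  have hredD : ∀ a : ({a : Fin n | Sum.inl a ∈ R.supp}ᶜ : Set (Fin n)),
      ∃ b : ({b : Fin n | Sum.inr b ∈ R.supp}ᶜ : Set (Fin n)), c a.1 b.1 = 0 := by
    rintro ⟨a, ha⟩
    obtain ⟨b, hb⟩ := hdeg.1 a 0
    refine ⟨⟨b, fun hbR => ?_⟩, hb⟩
    exact ha ((hsame a b hb).mpr hbR)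
  constructor
  · by_contra h3
    push_neg at h3
    obtain ⟨u, hu, v, hv, huv⟩ := small_set_two hCne (by omega)
    refine hCD (hasPart_left _ ⟨u, hu⟩ ⟨v, hv⟩ ?_ ?_)
    · rintro ⟨a, ha⟩
      rcases huv a ha with rfl | rfl
      · exact Or.inl rfl
      · exact Or.inr rfl
    · intro b
      obtain ⟨⟨a, ha⟩, hab⟩ := hredC b
      rcases huv a ha with rfl | rfl
      · exact Or.inl hab
      · exact Or.inr hab
  · by_contra h3
    push_neg at h3
    obtain ⟨u, hu, v, hv, huv⟩ := small_set_two hDne (by omega)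
    refine hCD (hasPart_right _ ⟨u, hu⟩ ⟨v, hv⟩ ?_ ?_)
    · rintro ⟨b, hb⟩
      rcases huv b hb with rfl | rfl
      · exact Or.inl rfl
      · exact Or.inr rfl
    · intro a
      obtain ⟨⟨b, hb⟩, hab⟩ := hredD a
      rcases huv b hb with rfl | rfl
      · exact Or.inl hab
      · exact Or.inr hab
end
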